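/- Let g be a finite-dimensional real Lie algebra with ad-invariant nondegenerate symmetric bilinear form, and h, k subalgebras satisfying h^⊥ + k^⊥ = g (equivalently h ∩ k orthogonality condition). Then for any ξ ∈ g, [dim((h^⊥+[ξ,g]) ∩ k^⊥) − dim[ξ,k]] + [dim((k^⊥+[ξ,g]) ∩ h^⊥) − dim[ξ,h]] = 2(dim g − dim k − dim h). -/

import Mathlib

open Module

section aux

variable {L : Type*} [LieRing L] [LieAlgebra ℝ L] [FiniteDimensional ℝ L]

lemma stmt7_aux_map (f : L →ₗ[ℝ] L) (W : Submodule ℝ L) :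
    finrank ℝ (W.map f) + finrank ℝ (W ⊓ LinearMap.ker f : Submodule ℝ L)
      = finrank ℝ W := by
  have h1 := LinearMap.finrank_range_add_finrank_ker (f.domRestrict W)
  have h2 : LinearMap.range (f.domRestrict W) = W.map f := by
    ext x
    simp [LinearMap.mem_range, Submodule.mem_map, Subtype.exists]
  have h3 : LinearMap.ker (f.domRestrict W) = Submodule.comap W.subtype (LinearMap.ker f) := by
    ext x; simp [LinearMap.mem_ker]
  have h4 : finrank ℝ (Submodule.comap W.subtype (LinearMap.ker f))
      = finrank ℝ (W ⊓ LinearMap.ker f : Submodule ℝ L) := by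
    rw [← Submodule.map_comap_subtype, Submodule.finrank_map_subtype_eq]
  rw [h2, h3, h4] at h1
  simpa using h1

lemma stmt7_aux_orth_sup (B : LinearMap.BilinForm ℝ L) (X Y : Submodule ℝ L) :
    B.orthogonal (X ⊔ Y) = B.orthogonal X ⊓ B.orthogonal Y := by
  refine le_antisymm (le_inf (B.orthogonal_le le_sup_left) (B.orthogonal_le le_sup_right)) ?_
  intro m hm n hn
  obtain ⟨x, hx, y, hy, rfl⟩ := Submodule.mem_sup.mp hn
  have h1 : B x m = 0 := hm.1 x hx
  have h2 : B y m = 0 := hm.2 y hy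
  simp [LinearMap.BilinForm.IsOrtho, map_add, h1, h2]

end aux

/-- the key dimension count for bi-quotients `K\G/H`:
`[dim((h^⊥+[ξ,g]) ∩ k^⊥) − dim[ξ,k]] + [dim((k^⊥+[ξ,g]) ∩ h^⊥) − dim[ξ,h]]
  = 2(dim g − dim k − dim h)`, as an identity of integers. -/
theorem stmt7 (L : Type*) [LieRing L] [LieAlgebra ℝ L] [FiniteDimensional ℝ L]
    (B : LinearMap.BilinForm ℝ L)
    (hsymm : ∀ x y : L, B x y = B y x)
    (hnd : B.Nondegenerate)
    (hinv : ∀ x y z : L, B ⁅x, y⁆ z = B x ⁅y, z⁆)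
    (h k : LieSubalgebra ℝ L)
    (hsum : LinearMap.BilinForm.orthogonal B h.toSubmodule
        ⊔ LinearMap.BilinForm.orthogonal B k.toSubmodule = ⊤)
    (ξ : L) :
    ((Module.finrank ℝ
        ((LinearMap.BilinForm.orthogonal B h.toSubmodule
            ⊔ LinearMap.range (LieAlgebra.ad ℝ L ξ))
          ⊓ LinearMap.BilinForm.orthogonal B k.toSubmodule : Submodule ℝ L) : ℤ)
      - (Module.finrank ℝ (Submodule.map (LieAlgebra.ad ℝ L ξ) k.toSubmodule) : ℤ))
    + ((Module.finrank ℝ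
        ((LinearMap.BilinForm.orthogonal B k.toSubmodule
            ⊔ LinearMap.range (LieAlgebra.ad ℝ L ξ))
          ⊓ LinearMap.BilinForm.orthogonal B h.toSubmodule : Submodule ℝ L) : ℤ)
      - (Module.finrank ℝ (Submodule.map (LieAlgebra.ad ℝ L ξ) h.toSubmodule) : ℤ))
    = 2 * ((Module.finrank ℝ L : ℤ) - (Module.finrank ℝ k.toSubmodule : ℤ)
        - (Module.finrank ℝ h.toSubmodule : ℤ)) := by
  set f := LieAlgebra.ad ℝ L ξ with hf
  have hrefl : B.IsRefl := fun x y hxy => by rw [hsymm]; exact hxy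
  -- the orthogonal of the range of `ad ξ` is its kernel
  have horth_range : B.orthogonal (LinearMap.range f) = LinearMap.ker f := by
    ext y
    rw [LinearMap.BilinForm.mem_orthogonal_iff, LinearMap.mem_ker]
    constructor
    · intro hy
      apply hnd.1
      intro x
      have hx : B (f x) y = 0 := hy (f x) ⟨x, rfl⟩
      have : B ⁅ξ, x⁆ y = 0 := hx
      have hb : B x ⁅ξ, y⁆ = 0 := by
        have h1 : B ⁅x, ξ⁆ y = B x ⁅ξ, y⁆ := hinv x ξ y
        have h2 : (⁅x, ξ⁆ : L) = -⁅ξ, x⁆ := by rw [← lie_skew]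
        rw [h2, map_neg, LinearMap.neg_apply, this, neg_zero] at h1
        exact h1.symm
      rw [hsymm]
      simpa [hf, LieAlgebra.ad_apply] using hb
    · intro hy n hn
      obtain ⟨x, rfl⟩ := hn
      have h1 : B ⁅x, ξ⁆ y = B x ⁅ξ, y⁆ := hinv x ξ y
      have h2 : (⁅ξ, y⁆ : L) = 0 := by simpa [hf, LieAlgebra.ad_apply] using hy
      have h3 : (⁅x, ξ⁆ : L) = -⁅ξ, x⁆ := by rw [← lie_skew]
      rw [h2, h3, map_neg, LinearMap.neg_apply] at h1
      simp only [map_zero] at h1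
      have : B ⁅ξ, x⁆ y = 0 := by linarith [h1]
      simpa [hf, LieAlgebra.ad_apply] using this
  set n := finrank ℝ L with hn
  -- generic computation for a subalgebra
  have key : ∀ W : Submodule ℝ L,
      finrank ℝ (B.orthogonal W ⊔ LinearMap.range f : Submodule ℝ L)
        = n - finrank ℝ (W ⊓ LinearMap.ker f : Submodule ℝ L) := by
    intro W
    have e1 : B.orthogonal (B.orthogonal W ⊔ LinearMap.range f)
        = W ⊓ LinearMap.ker f := by
      rw [stmt7_aux_orth_sup, LinearMap.BilinForm.orthogonal_orthogonal hnd hrefl, horth_range]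
    calc finrank ℝ (B.orthogonal W ⊔ LinearMap.range f : Submodule ℝ L)
        = finrank ℝ (B.orthogonal (B.orthogonal (B.orthogonal W ⊔ LinearMap.range f))) := by
          rw [LinearMap.BilinForm.orthogonal_orthogonal hnd hrefl]
      _ = n - finrank ℝ (W ⊓ LinearMap.ker f : Submodule ℝ L) := by
          rw [e1, LinearMap.BilinForm.finrank_orthogonal hnd]
  -- dimensions of orthogonals
  have horthH : finrank ℝ (B.orthogonal h.toSubmodule) = n - finrank ℝ h.toSubmodule :=
    LinearMap.BilinForm.finrank_orthogonal hnd _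
  have horthK : finrank ℝ (B.orthogonal k.toSubmodule) = n - finrank ℝ k.toSubmodule :=
    LinearMap.BilinForm.finrank_orthogonal hnd _
  have hHle : finrank ℝ h.toSubmodule ≤ n := Submodule.finrank_le _
  have hKle : finrank ℝ k.toSubmodule ≤ n := Submodule.finrank_le _
  have hHkerle : finrank ℝ (h.toSubmodule ⊓ LinearMap.ker f : Submodule ℝ L) ≤ n :=
    Submodule.finrank_le _
  have hKkerle : finrank ℝ (k.toSubmodule ⊓ LinearMap.ker f : Submodule ℝ L) ≤ n :=
    Submodule.finrank_le _
  -- the two sups with the complementary orthogonal are everything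
  have htop1 : (B.orthogonal h.toSubmodule ⊔ LinearMap.range f)
      ⊔ B.orthogonal k.toSubmodule = ⊤ := by
    rw [eq_top_iff, ← hsum]
    exact sup_le (le_sup_of_le_left le_sup_left) le_sup_right
  have htop2 : (B.orthogonal k.toSubmodule ⊔ LinearMap.range f)
      ⊔ B.orthogonal h.toSubmodule = ⊤ := by
    rw [eq_top_iff, ← hsum]
    exact sup_le le_sup_right (le_sup_of_le_left le_sup_left)
  have hdim1 := Submodule.finrank_sup_add_finrank_inf_eq
    (B.orthogonal h.toSubmodule ⊔ LinearMap.range f) (B.orthogonal k.toSubmodule)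
  have hdim2 := Submodule.finrank_sup_add_finrank_inf_eq
    (B.orthogonal k.toSubmodule ⊔ LinearMap.range f) (B.orthogonal h.toSubmodule)
  rw [htop1, finrank_top] at hdim1
  rw [htop2, finrank_top] at hdim2
  rw [key h.toSubmodule, horthK] at hdim1
  rw [key k.toSubmodule, horthH] at hdim2
  have hmapH := stmt7_aux_map f h.toSubmodule
  have hmapK := stmt7_aux_map f k.toSubmodule
  omega
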